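/- Let p be a prime, D a discriminant form of even signature and level a power of p, and γ a nonzero isotropic element of D. Suppose γ^⊥ contains an isotropic subgroup of D isomorphic to (Z/pZ)^2. Then e^γ ∈ C[D] can be written as a linear combination of isotropic lifts: explicitly, if H_0, H_1, …, H_p are the p+1 order-p subgroups of such a group H, then e^γ = (1/p)( Σ_{j=1}^{p} ↑_{H_j}^D(e^{γ+H_j}) − ↑_{H_0}^D(Σ_{μ ∈ H_1∖{0}} e^{γ+μ+H_0}) ). -/

import Mathlib

open scoped Classical

/-- `e(x) = exp(2πix)`; it only depends on `x` modulo 1. -/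
noncomputable def e (x : ℚ) : ℂ := Complex.exp (2 * Real.pi * Complex.I * (x : ℂ))

/-- A discriminant form structure on a finite abelian group `D`: a function
`q : D → ℚ` representing a quadratic form `D → ℚ/ℤ` (all identities hold modulo 1)
whose associated bilinear form `b(β,γ) = q(β+γ) - q(β) - q(γ) mod 1` is
nondegenerate. -/
structure IsDiscForm (D : Type*) [AddCommGroup D] [Fintype D] (q : D → ℚ) : Prop where
  quad : ∀ (n : ℤ) (γ : D), ∃ k : ℤ, q (n • γ) - (n : ℚ) ^ 2 * q γ = (k : ℚ)
  bilin : ∀ α β γ : D, ∃ k : ℤ,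
    (q (α + β + γ) - q (α + β) - q γ) - (q (α + γ) - q α - q γ)
      - (q (β + γ) - q β - q γ) = (k : ℚ)
  nondeg : ∀ γ : D, (∀ β : D, ∃ k : ℤ, q (γ + β) - q γ - q β = (k : ℚ)) → γ = 0

/-- let `D` be a discriminant form of even signature and level a power
of a prime `p`, and let `γ` be a (nonzero) isotropic element such that `γ^⊥` contains
an isotropic subgroup `H ≅ (ℤ/pℤ)²`.  Then, with `H₀, H₁, …, H_p` the `p+1` order-`p`
subgroups of `H`, `e^γ` is the following linear combination of isotropic lifts:
`e^γ = (1/p)(Σ_{j=1}^p ↑_{H_j}^D(e^{γ+H_j}) - ↑_{H_0}^D(Σ_{μ∈H_1∖{0}} e^{γ+μ+H_0}))`,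
an identity of functions on `D` (here `↑_{H_j}^D(e^{γ+H_j})` is the characteristic
function of the coset `γ + H_j`). -/
theorem e_gamma_is_combination_of_lifts
    (p : ℕ) (hp : p.Prime)
    (D : Type) [AddCommGroup D] [Fintype D] (q : D → ℚ) (hD : IsDiscForm D q)
    (l : ℕ) (hlev : ∀ γ : D, ∃ k : ℤ, (p : ℚ) ^ l * q γ = (k : ℚ))
    (σ : ℂ)
    (hMilgram : ∑ γ : D, e (q γ) = (Real.sqrt (Fintype.card D) : ℂ) * σ)
    (hEvenSig : σ ^ 4 = 1)
    (γ : D) (hγiso : ∃ k : ℤ, q γ = (k : ℚ)) (hγne : γ ≠ 0)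
    (H : AddSubgroup D)
    (hHiso : ∀ h ∈ H, ∃ k : ℤ, q h = (k : ℚ))
    (hHperp : ∀ h ∈ H, ∃ k : ℤ, q (γ + h) - q γ - q h = (k : ℚ))
    (hHcard : Nat.card H = p ^ 2) (hHexp : ∀ h ∈ H, p • h = 0)
    (Hs : Fin (p + 1) → AddSubgroup D)
    (hHsle : ∀ j, Hs j ≤ H) (hHsinj : Function.Injective Hs)
    (hHscard : ∀ j, Nat.card (Hs j) = p)
    (hHsall : ∀ K : AddSubgroup D, K ≤ H → Nat.card K = p → ∃ j, K = Hs j) :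
    ∀ β : D, (if β = γ then (1 : ℂ) else 0)
      = (1 / (p : ℂ)) *
        ((∑ j ∈ Finset.univ.erase (0 : Fin (p + 1)),
            (if β - γ ∈ Hs j then (1 : ℂ) else 0))
         - ∑ μ : D, (if μ ∈ Hs (1 : Fin (p + 1)) ∧ μ ≠ 0 ∧ β - γ - μ ∈ Hs (0 : Fin (p + 1))
             then (1 : ℂ) else 0)) := by
  have hp2 : 2 ≤ p := hp.two_le
  have hpC : (p : ℂ) ≠ 0 := Nat.cast_ne_zero.mpr hp.pos.ne'
  have h01 : (0 : Fin (p + 1)) ≠ (1 : Fin (p + 1)) := by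
    intro h
    have hv : ((0 : Fin (p + 1)).val) = ((1 : Fin (p + 1)).val) := by rw [h]
    rw [Fin.val_zero, Fin.val_one'] at hv
    rw [Nat.mod_eq_of_lt (by omega)] at hv
    exact absurd hv.symm one_ne_zero
  -- every nonzero element of H lies in a unique Hs j
  have hzmul : ∀ x : D, x ∈ H → x ≠ 0 → ∀ j : Fin (p + 1), x ∈ Hs j →
      AddSubgroup.zmultiples x = Hs j := by
    intro x hxH hx0 j hj
    have hdvd : addOrderOf x ∣ p := addOrderOf_dvd_of_nsmul_eq_zero (hHexp x hxH)
    have hord : addOrderOf x = p := by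
      rcases hp.eq_one_or_self_of_dvd _ hdvd with h1 | h1
      · exact absurd (AddMonoid.addOrderOf_eq_one_iff.mp h1) hx0
      · exact h1
    exact AddSubgroup.eq_of_le_of_card_ge (AddSubgroup.zmultiples_le_of_mem hj)
      (by rw [hHscard, Nat.card_zmultiples, hord])
  have huniq : ∀ x : D, x ∈ H → x ≠ 0 → ∀ j k : Fin (p + 1), x ∈ Hs j → x ∈ Hs k → j = k := by
    intro x hxH hx0 j k hj hk
    exact hHsinj ((hzmul x hxH hx0 j hj).symm.trans (hzmul x hxH hx0 k hk))
  have hex : ∀ x : D, x ∈ H → x ≠ 0 → ∃ j, x ∈ Hs j := by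
    intro x hxH hx0
    have hdvd : addOrderOf x ∣ p := addOrderOf_dvd_of_nsmul_eq_zero (hHexp x hxH)
    have hord : addOrderOf x = p := by
      rcases hp.eq_one_or_self_of_dvd _ hdvd with h1 | h1
      · exact absurd (AddMonoid.addOrderOf_eq_one_iff.mp h1) hx0
      · exact h1
    obtain ⟨j, hj⟩ := hHsall (AddSubgroup.zmultiples x)
      (AddSubgroup.zmultiples_le_of_mem hxH) (by rw [Nat.card_zmultiples, hord])
    exact ⟨j, hj ▸ AddSubgroup.mem_zmultiples x⟩
  -- trivial intersection of Hs 0 and Hs 1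
  have hint : ∀ z : D, z ∈ Hs 0 → z ∈ Hs 1 → z = 0 := by
    intro z h0 h1
    by_contra hz
    exact h01 (huniq z (hHsle 0 h0) hz 0 1 h0 h1)
  -- decomposition H = Hs 0 + Hs 1
  have hdec : ∀ x : D, x ∈ H → ∃ μ : D, μ ∈ Hs 1 ∧ x - μ ∈ Hs 0 := by
    intro x hxH
    let f : (Hs 0) × (Hs 1) → H := fun ab =>
      ⟨(ab.1 : D) + ab.2, H.add_mem (hHsle 0 ab.1.2) (hHsle 1 ab.2.2)⟩
    have hinj : Function.Injective f := by
      rintro ⟨a, b⟩ ⟨a', b'⟩ hab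
      have h' : (a : D) + b = (a' : D) + b' := congrArg Subtype.val hab
      have hz : (a : D) - a' = (b' : D) - b := by
        linear_combination (norm := abel_nf) h'
      have hmem0 : (a : D) - a' ∈ Hs 0 := (Hs 0).sub_mem a.2 a'.2
      have hmem1 : (a : D) - a' ∈ Hs 1 := hz ▸ (Hs 1).sub_mem b'.2 b.2
      have h0 : (a : D) - a' = 0 := hint _ hmem0 hmem1
      have ha : (a : D) = a' := sub_eq_zero.mp h0
      have hb : (b : D) = b' := (sub_eq_zero.mp (hz.symm.trans h0)).symm
      exact Prod.ext (Subtype.ext ha) (Subtype.ext hb)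
    have hcard : Nat.card ((Hs 0) × (Hs 1)) = Nat.card H := by
      rw [Nat.card_prod, hHscard, hHscard, hHcard, sq]
    have hbij : Function.Bijective f :=
      (Nat.bijective_iff_injective_and_card f).mpr ⟨hinj, hcard⟩
    obtain ⟨⟨a, b⟩, hfab⟩ := hbij.2 ⟨x, hxH⟩
    have h' : (a : D) + b = x := congrArg Subtype.val hfab
    exact ⟨b, b.2, by rw [← h']; simpa using a.2⟩
  have hdecu : ∀ x μ μ' : D, μ ∈ Hs 1 → x - μ ∈ Hs 0 → μ' ∈ Hs 1 → x - μ' ∈ Hs 0 →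
      μ = μ' := by
    intro x μ μ' h1 h0 h1' h0'
    have hmem0 : μ - μ' ∈ Hs 0 := by
      have := (Hs 0).sub_mem h0' h0
      have he : (x - μ') - (x - μ) = μ - μ' := by abel
      rwa [he] at this
    have hmem1 : μ - μ' ∈ Hs 1 := (Hs 1).sub_mem h1 h1'
    have := hint _ hmem0 hmem1
    exact sub_eq_zero.mp this
  intro β
  by_cases hβ : β = γ
  · subst hβ
    rw [if_pos rfl]
    have hsub : β - β = 0 := sub_self β
    have hsum1 : (∑ j ∈ Finset.univ.erase (0 : Fin (p + 1)),
        (if β - β ∈ Hs j then (1 : ℂ) else 0)) = (p : ℂ) := by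
      rw [Finset.sum_congr rfl (fun j _ => if_pos (by rw [hsub]; exact (Hs j).zero_mem))]
      rw [Finset.sum_const, Finset.card_erase_of_mem (Finset.mem_univ _),
        Finset.card_univ, Fintype.card_fin]
      simp
    have hsum2 : (∑ μ : D, (if μ ∈ Hs (1 : Fin (p + 1)) ∧ μ ≠ 0 ∧
        β - β - μ ∈ Hs (0 : Fin (p + 1)) then (1 : ℂ) else 0)) = 0 := by
      apply Finset.sum_eq_zero
      intro μ _
      rw [if_neg]
      rintro ⟨h1, h2, h3⟩
      rw [hsub, zero_sub] at h3
      exact h2 (hint μ (by simpa using (Hs 0).neg_mem h3) h1)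
    rw [hsum1, hsum2]
    field_simp
    rw [sub_zero]
  · rw [if_neg hβ]
    have hx0 : β - γ ≠ 0 := sub_ne_zero.mpr hβ
    by_cases hxH : β - γ ∈ H
    · obtain ⟨j₀, hj₀⟩ := hex _ hxH hx0
      obtain ⟨μ₀, hμ₀1, hμ₀0⟩ := hdec _ hxH
      have hsum1 : (∑ j ∈ Finset.univ.erase (0 : Fin (p + 1)),
          (if β - γ ∈ Hs j then (1 : ℂ) else 0))
          = if j₀ ∈ Finset.univ.erase (0 : Fin (p + 1)) then (1 : ℂ) else 0 := by
        rw [Finset.sum_congr rfl (fun j _ => ?_), Finset.sum_ite_eq' _ j₀ (fun _ => (1 : ℂ))]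
        congr 1
        · simp only [eq_iff_iff]
          constructor
          · intro h; exact huniq _ hxH hx0 j j₀ h hj₀
          · intro h; exact h ▸ hj₀
      have hsum2 : (∑ μ : D, (if μ ∈ Hs (1 : Fin (p + 1)) ∧ μ ≠ 0 ∧
          β - γ - μ ∈ Hs (0 : Fin (p + 1)) then (1 : ℂ) else 0))
          = if μ₀ ≠ 0 then (1 : ℂ) else 0 := by
        have : ∀ μ : D, (if μ ∈ Hs (1 : Fin (p + 1)) ∧ μ ≠ 0 ∧
            β - γ - μ ∈ Hs (0 : Fin (p + 1)) then (1 : ℂ) else 0)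
            = if μ = μ₀ then (if μ₀ ≠ 0 then (1 : ℂ) else 0) else 0 := by
          intro μ
          by_cases hμ : μ = μ₀
          · subst hμ
            rw [if_pos rfl]
            by_cases h0 : μ ≠ 0
            · rw [if_pos ⟨hμ₀1, h0, hμ₀0⟩, if_pos h0]
            · rw [if_neg (fun h => h0 h.2.1), if_neg h0]
          · rw [if_neg hμ, if_neg]
            rintro ⟨h1, _, h3⟩
            exact hμ (hdecu (β - γ) μ μ₀ h1 h3 hμ₀1 hμ₀0)
        rw [Finset.sum_congr rfl (fun μ _ => this μ), Finset.sum_ite_eq' _ μ₀ _,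
          if_pos (Finset.mem_univ _)]
      rw [hsum1, hsum2]
      have hiff : (j₀ ∈ Finset.univ.erase (0 : Fin (p + 1))) ↔ μ₀ ≠ 0 := by
        rw [Finset.mem_erase]
        constructor
        · rintro ⟨hj, -⟩ hμ0
          subst hμ0
          rw [sub_zero] at hμ₀0
          exact hj (huniq _ hxH hx0 j₀ 0 hj₀ hμ₀0)
        · intro hμ0
          refine ⟨fun hj0 => ?_, Finset.mem_univ _⟩
          subst hj0
          exact hμ0 (hdecu (β - γ) μ₀ 0 hμ₀1 hμ₀0 (Hs 1).zero_mem (by simpa using hj₀))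
      by_cases hj : j₀ ∈ Finset.univ.erase (0 : Fin (p + 1))
      · rw [if_pos hj, if_pos (hiff.mp hj)]; ring
      · rw [if_neg hj, if_neg (fun h => hj (hiff.mpr h))]; ring
    · have hsum1 : (∑ j ∈ Finset.univ.erase (0 : Fin (p + 1)),
          (if β - γ ∈ Hs j then (1 : ℂ) else 0)) = 0 := by
        apply Finset.sum_eq_zero
        intro j _
        exact if_neg (fun h => hxH (hHsle j h))
      have hsum2 : (∑ μ : D, (if μ ∈ Hs (1 : Fin (p + 1)) ∧ μ ≠ 0 ∧
          β - γ - μ ∈ Hs (0 : Fin (p + 1)) then (1 : ℂ) else 0)) = 0 := by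
        apply Finset.sum_eq_zero
        intro μ _
        refine if_neg ?_
        rintro ⟨h1, _, h3⟩
        have : β - γ = (β - γ - μ) + μ := by abel
        exact hxH (this ▸ H.add_mem (hHsle 0 h3) (hHsle 1 h1))
      rw [hsum1, hsum2]
      ring
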